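/- Let H be a real Hilbert space and δ > 0. Let μ : [0, ∞) → ℝ be continuously differentiable with μ(s) ≥ 0 and μ'(s) + δ·μ(s) ≤ 0 for all s ≥ 0. Let η : [0, ∞) → H be continuously differentiable with η(0) = 0, suppose the functions s ↦ μ(s)·⟨η(s), η'(s)⟩ and s ↦ μ(s)·‖η(s)‖² are integrable on [0, ∞), and suppose μ(s)·‖η(s)‖² → 0 as s → ∞. Then ∫₀^∞ μ(s)·⟨η(s), η'(s)⟩ ds ≥ (δ/2) · ∫₀^∞ μ(s)·‖η(s)‖² ds. -/

import Mathlib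

open MeasureTheory Filter

/-- Hilbert-space form of the memory-kernel lemma. If `μ ≥ 0` is C¹ on
`[0,∞)` with `μ' + δμ ≤ 0`, and `η : [0,∞) → H` is C¹ with `η 0 = 0`, the functions
`s ↦ μ(s)⟨η(s), η'(s)⟩` and `s ↦ μ(s)‖η(s)‖²` are integrable on `[0,∞)`, and
`μ(s)‖η(s)‖² → 0` at infinity, then
`∫₀^∞ μ(s)⟨η(s), η'(s)⟩ ds ≥ (δ/2) ∫₀^∞ μ(s)‖η(s)‖² ds`. -/
theorem memory_kernel_inner_estimate
    {H : Type*} [NormedAddCommGroup H] [InnerProductSpace ℝ H]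
    (δ : ℝ) (hδ : 0 < δ)
    (μ μ' : ℝ → ℝ)
    (hμderiv : ∀ s ∈ Set.Ici (0:ℝ), HasDerivAt μ (μ' s) s)
    (hμ'cont : ContinuousOn μ' (Set.Ici 0))
    (hμnonneg : ∀ s ∈ Set.Ici (0:ℝ), 0 ≤ μ s)
    (hμdiss : ∀ s ∈ Set.Ici (0:ℝ), μ' s + δ * μ s ≤ 0)
    (η η' : ℝ → H)
    (hηderiv : ∀ s ∈ Set.Ici (0:ℝ), HasDerivAt η (η' s) s)
    (hη'cont : ContinuousOn η' (Set.Ici 0))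
    (hη0 : η 0 = 0)
    (hint1 : IntegrableOn (fun s => μ s * (inner ℝ (η s) (η' s) : ℝ)) (Set.Ici 0))
    (hint2 : IntegrableOn (fun s => μ s * ‖η s‖ ^ 2) (Set.Ici 0))
    (hlim : Tendsto (fun s => μ s * ‖η s‖ ^ 2) atTop (nhds 0)) :
    (∫ s in Set.Ici (0:ℝ), μ s * (inner ℝ (η s) (η' s) : ℝ)) ≥
      (δ / 2) * ∫ s in Set.Ici (0:ℝ), μ s * ‖η s‖ ^ 2 := by
  have hμcont : ContinuousOn μ (Set.Ici 0) := fun s hs =>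
    (hμderiv s hs).continuousAt.continuousWithinAt
  have hηcont : ContinuousOn η (Set.Ici 0) := fun s hs =>
    (hηderiv s hs).continuousAt.continuousWithinAt
  have hf1cont : ContinuousOn (fun s => μ s * (inner ℝ (η s) (η' s) : ℝ)) (Set.Ici 0) :=
    hμcont.mul (hηcont.inner hη'cont)
  have hf2cont : ContinuousOn (fun s => μ s * ‖η s‖ ^ 2) (Set.Ici 0) :=
    hμcont.mul ((hηcont.norm).pow 2)
  have hμ'f : ContinuousOn (fun s => μ' s * ‖η s‖ ^ 2) (Set.Ici 0) :=
    hμ'cont.mul ((hηcont.norm).pow 2)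
  -- derivative of g := μ * ‖η‖²
  have hg : ∀ s ∈ Set.Ici (0:ℝ), HasDerivAt (fun t => μ t * ‖η t‖ ^ 2)
      (μ' s * ‖η s‖ ^ 2 + 2 * (μ s * (inner ℝ (η s) (η' s) : ℝ))) s := by
    intro s hs
    have h1 : HasDerivAt (fun t => (inner ℝ (η t) (η t) : ℝ))
        ((inner ℝ (η s) (η' s) : ℝ) + (inner ℝ (η' s) (η s) : ℝ)) s :=
      (hηderiv s hs).inner ℝ (hηderiv s hs)
    have h2 : HasDerivAt (fun t => μ t * (inner ℝ (η t) (η t) : ℝ)) _ s := (hμderiv s hs).mul h1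
    have heq : (fun t => μ t * (inner ℝ (η t) (η t) : ℝ)) = fun t => μ t * ‖η t‖ ^ 2 := by
      funext t; rw [real_inner_self_eq_norm_sq]
    rw [heq] at h2
    convert h2 using 1
    rw [real_inner_self_eq_norm_sq, real_inner_comm (η' s) (η s)]
    ring
  -- pointwise inequality over [0,T]
  have key : ∀ T : ℝ, 0 ≤ T →
      δ * ∫ s in (0:ℝ)..T, μ s * ‖η s‖ ^ 2 ≤
        2 * ∫ s in (0:ℝ)..T, μ s * (inner ℝ (η s) (η' s) : ℝ) := by
    intro T hT
    have hsub : Set.uIcc (0:ℝ) T ⊆ Set.Ici 0 := by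
      rw [Set.uIcc_of_le hT]; exact fun x hx => hx.1
    have hii1 : IntervalIntegrable (fun s => μ s * (inner ℝ (η s) (η' s) : ℝ))
        volume 0 T := (hf1cont.mono hsub).intervalIntegrable
    have hii2 : IntervalIntegrable (fun s => μ s * ‖η s‖ ^ 2) volume 0 T :=
      (hf2cont.mono hsub).intervalIntegrable
    have hii3 : IntervalIntegrable (fun s => μ' s * ‖η s‖ ^ 2) volume 0 T :=
      (hμ'f.mono hsub).intervalIntegrable
    have hftc : ∫ s in (0:ℝ)..T,
        (μ' s * ‖η s‖ ^ 2 + 2 * (μ s * (inner ℝ (η s) (η' s) : ℝ)))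
        = μ T * ‖η T‖ ^ 2 - μ 0 * ‖η 0‖ ^ 2 := by
      apply intervalIntegral.integral_eq_sub_of_hasDerivAt
      · intro s hs
        rw [Set.uIcc_of_le hT] at hs
        exact hg s (Set.mem_Ici.mpr hs.1)
      · exact hii3.add (hii1.const_mul 2)
    rw [hη0] at hftc
    simp only [norm_zero, zero_pow, mul_zero, sub_zero] at hftc
    rw [intervalIntegral.integral_add hii3 (hii1.const_mul 2),
      intervalIntegral.integral_const_mul] at hftc
    have hmono : ∫ s in (0:ℝ)..T, μ' s * ‖η s‖ ^ 2 ≤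
        ∫ s in (0:ℝ)..T, -δ * (μ s * ‖η s‖ ^ 2) := by
      apply intervalIntegral.integral_mono_on hT hii3 (hii2.const_mul (-δ))
      intro s hs
      have hs0 : s ∈ Set.Ici (0:ℝ) := Set.mem_Ici.mpr hs.1
      have := hμdiss s hs0
      have hn : (0:ℝ) ≤ ‖η s‖ ^ 2 := by positivity
      nlinarith
    rw [intervalIntegral.integral_const_mul] at hmono
    have hTnn : 0 ≤ μ T * ‖η T‖ ^ 2 := by
      have := hμnonneg T (Set.mem_Ici.mpr hT); positivity
    nlinarith [hftc, hmono]
  -- pass to the limit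
  have hint1' : IntegrableOn (fun s => μ s * (inner ℝ (η s) (η' s) : ℝ)) (Set.Ioi 0) :=
    hint1.mono_set Set.Ioi_subset_Ici_self
  have hint2' : IntegrableOn (fun s => μ s * ‖η s‖ ^ 2) (Set.Ioi 0) :=
    hint2.mono_set Set.Ioi_subset_Ici_self
  have t1 := MeasureTheory.intervalIntegral_tendsto_integral_Ioi 0 hint1' tendsto_id
  have t2 := MeasureTheory.intervalIntegral_tendsto_integral_Ioi 0 hint2' tendsto_id
  have hlim_ineq : δ * ∫ s in Set.Ioi (0:ℝ), μ s * ‖η s‖ ^ 2 ≤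
      2 * ∫ s in Set.Ioi (0:ℝ), μ s * (inner ℝ (η s) (η' s) : ℝ) := by
    refine le_of_tendsto_of_tendsto (t2.const_mul δ) (t1.const_mul 2) ?_
    filter_upwards [eventually_ge_atTop (0:ℝ)] with T hT using key T hT
  rw [MeasureTheory.integral_Ici_eq_integral_Ioi,
    MeasureTheory.integral_Ici_eq_integral_Ioi]
  linarith
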